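/- Suppose Λ, φ, α : ℝ² → ℝ are C² and satisfy: ∂t(α ∂tΛ) − ∂x(α ∂xΛ) = 2α sinh(2Λ)((∂tφ)² − (∂xφ)²), ∂t(α sinh²Λ ∂tφ) − ∂x(α sinh²Λ ∂xφ) = 0, and ∂t²α − ∂x²α = 0, with α > 0 and (∂xα)² ≠ (∂tα)² everywhere. Define κ = α/((∂xα)² − (∂tα)²), h1 = (∂xα)²/α² + (∂tα)²/α² + (∂tΛ)² + (∂xΛ)² + 4sinh²Λ((∂tφ)² + (∂xφ)²), h2 = ∂xα∂tα/α² + ∂tΛ∂xΛ + 4sinh²Λ ∂tφ∂xφ, e = κ(∂tα · h1 − 2∂xα · h2), p = κ(∂xα · h1 − 2∂tα · h2). Then ∂t p + ∂x e = 0. -/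

import Mathlib

open Real

noncomputable def pt (f : ℝ → ℝ → ℝ) (t x : ℝ) : ℝ := deriv (fun s => f s x) t

noncomputable def px (f : ℝ → ℝ → ℝ) (t x : ℝ) : ℝ := deriv (fun y => f t y) x

/-- κ = α / ((∂xα)² − (∂tα)²). -/
noncomputable def kap (α : ℝ → ℝ → ℝ) (t x : ℝ) : ℝ :=
  α t x / ((px α t x) ^ 2 - (pt α t x) ^ 2)

/-- h₁ density (full version, including the α-terms). -/
noncomputable def h1 (Λ φ α : ℝ → ℝ → ℝ) (t x : ℝ) : ℝ :=
  (px α t x) ^ 2 / (α t x) ^ 2 + (pt α t x) ^ 2 / (α t x) ^ 2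
    + (pt Λ t x) ^ 2 + (px Λ t x) ^ 2
    + 4 * Real.sinh (Λ t x) ^ 2 * ((pt φ t x) ^ 2 + (px φ t x) ^ 2)

/-- h₂ density (full version, including the α-term). -/
noncomputable def h2 (Λ φ α : ℝ → ℝ → ℝ) (t x : ℝ) : ℝ :=
  px α t x * pt α t x / (α t x) ^ 2 + pt Λ t x * px Λ t x
    + 4 * Real.sinh (Λ t x) ^ 2 * (pt φ t x * px φ t x)

/-- Energy density `e = κ(∂tα h₁ − 2 ∂xα h₂)`. -/
noncomputable def eDen (Λ φ α : ℝ → ℝ → ℝ) (t x : ℝ) : ℝ :=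
  kap α t x * (pt α t x * h1 Λ φ α t x - 2 * px α t x * h2 Λ φ α t x)

/-- Momentum density `p = κ(∂xα h₁ − 2 ∂tα h₂)`. -/
noncomputable def pDen (Λ φ α : ℝ → ℝ → ℝ) (t x : ℝ) : ℝ :=
  kap α t x * (px α t x * h1 Λ φ α t x - 2 * pt α t x * h2 Λ φ α t x)

noncomputable def unc (f : ℝ → ℝ → ℝ) : ℝ × ℝ → ℝ := fun p => f p.1 p.2

noncomputable def D1 (g : ℝ × ℝ → ℝ) (p : ℝ × ℝ) : ℝ := fderiv ℝ g p (1, 0)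
noncomputable def D2 (g : ℝ × ℝ → ℝ) (p : ℝ × ℝ) : ℝ := fderiv ℝ g p (0, 1)

lemma hasDerivAt_D1 (g : ℝ × ℝ → ℝ) (t x : ℝ) (h : DifferentiableAt ℝ g (t, x)) :
    HasDerivAt (fun s => g (s, x)) (D1 g (t, x)) t := by
  have hline : HasDerivAt (fun s : ℝ => ((s, x) : ℝ × ℝ)) ((1 : ℝ), (0 : ℝ)) t := by
    simpa using (hasDerivAt_id t).prodMk (hasDerivAt_const t x)
  exact h.hasFDerivAt.comp_hasDerivAt t hline

lemma hasDerivAt_D2 (g : ℝ × ℝ → ℝ) (t x : ℝ) (h : DifferentiableAt ℝ g (t, x)) :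
    HasDerivAt (fun y => g (t, y)) (D2 g (t, x)) x := by
  have hline : HasDerivAt (fun y : ℝ => ((t, y) : ℝ × ℝ)) ((0 : ℝ), (1 : ℝ)) x := by
    simpa using (hasDerivAt_const x t).prodMk (hasDerivAt_id x)
  exact h.hasFDerivAt.comp_hasDerivAt x hline

lemma contDiff_D1 {g : ℝ × ℝ → ℝ} (hg : ContDiff ℝ 2 g) : ContDiff ℝ 1 (D1 g) :=
  (hg.fderiv_right (by norm_num)).clm_apply contDiff_const

lemma contDiff_D2 {g : ℝ × ℝ → ℝ} (hg : ContDiff ℝ 2 g) : ContDiff ℝ 1 (D2 g) :=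
  (hg.fderiv_right (by norm_num)).clm_apply contDiff_const

lemma D1D2_symm {g : ℝ × ℝ → ℝ} (hg : ContDiff ℝ 2 g) (p : ℝ × ℝ) :
    D1 (D2 g) p = D2 (D1 g) p := by
  have hdiff : Differentiable ℝ g := hg.differentiable (by norm_num)
  have hf' : ContDiff ℝ 1 (fderiv ℝ g) := hg.fderiv_right (by norm_num)
  have hf'' : HasFDerivAt (fderiv ℝ g) (fderiv ℝ (fderiv ℝ g) p) p :=
    (hf'.differentiable (by norm_num) p).hasFDerivAt
  have hsymm := second_derivative_symmetric (fun y => (hdiff y).hasFDerivAt) hf''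
      ((1 : ℝ), (0 : ℝ)) ((0 : ℝ), (1 : ℝ))
  have e1 : ∀ v : ℝ × ℝ, D1 (fun q => fderiv ℝ g q v) p = fderiv ℝ (fderiv ℝ g) p (1, 0) v := by
    intro v
    have happ : HasFDerivAt (fun q => fderiv ℝ g q v)
        (((ContinuousLinearMap.apply ℝ ℝ v).comp (fderiv ℝ (fderiv ℝ g) p))) p :=
      (ContinuousLinearMap.apply ℝ ℝ v).hasFDerivAt.comp p hf''
    simp [D1, happ.fderiv]
  have e2 : ∀ v : ℝ × ℝ, D2 (fun q => fderiv ℝ g q v) p = fderiv ℝ (fderiv ℝ g) p (0, 1) v := by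
    intro v
    have happ : HasFDerivAt (fun q => fderiv ℝ g q v)
        (((ContinuousLinearMap.apply ℝ ℝ v).comp (fderiv ℝ (fderiv ℝ g) p))) p :=
      (ContinuousLinearMap.apply ℝ ℝ v).hasFDerivAt.comp p hf''
    simp [D2, happ.fderiv]
  calc D1 (D2 g) p = fderiv ℝ (fderiv ℝ g) p (1, 0) (0, 1) := e1 _
    _ = fderiv ℝ (fderiv ℝ g) p (0, 1) (1, 0) := hsymm
    _ = D2 (D1 g) p := (e2 _).symm

lemma pt_eq {f : ℝ → ℝ → ℝ} (h : Differentiable ℝ (unc f)) (t x : ℝ) :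
    pt f t x = D1 (unc f) (t, x) :=
  (hasDerivAt_D1 _ t x (h _)).deriv

lemma px_eq {f : ℝ → ℝ → ℝ} (h : Differentiable ℝ (unc f)) (t x : ℝ) :
    px f t x = D2 (unc f) (t, x) :=
  (hasDerivAt_D2 _ t x (h _)).deriv

set_option maxHeartbeats 4000000 in
/-- first modified continuity equation `∂t p + ∂x e = 0`
for solutions of the reduced Einstein system. -/
theorem continuity_equation_one
    (Λ φ α : ℝ → ℝ → ℝ)
    (hΛ : ContDiff ℝ 2 (fun p : ℝ × ℝ => Λ p.1 p.2))
    (hφ : ContDiff ℝ 2 (fun p : ℝ × ℝ => φ p.1 p.2))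
    (hα : ContDiff ℝ 2 (fun p : ℝ × ℝ => α p.1 p.2))
    (heqΛ : ∀ t x,
      pt (fun t x => α t x * pt Λ t x) t x
        - px (fun t x => α t x * px Λ t x) t x
      = 2 * α t x * Real.sinh (2 * Λ t x) * ((pt φ t x) ^ 2 - (px φ t x) ^ 2))
    (heqφ : ∀ t x,
      pt (fun t x => α t x * Real.sinh (Λ t x) ^ 2 * pt φ t x) t x
        - px (fun t x => α t x * Real.sinh (Λ t x) ^ 2 * px φ t x) t x = 0)
    (heqα : ∀ t x, pt (pt α) t x - px (px α) t x = 0)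
    (hpos : ∀ t x, 0 < α t x)
    (hne : ∀ t x, (px α t x) ^ 2 ≠ (pt α t x) ^ 2) :
    ∀ t x, pt (pDen Λ φ α) t x + px (eDen Λ φ α) t x = 0 := by

  intro t x
  have hα' : ContDiff ℝ 2 (unc α) := hα
  have hΛ' : ContDiff ℝ 2 (unc Λ) := hΛ
  have hφ' : ContDiff ℝ 2 (unc φ) := hφ
  have hAd : Differentiable ℝ (unc α) := hα.differentiable (by norm_num)
  have hLd : Differentiable ℝ (unc Λ) := hΛ.differentiable (by norm_num)
  have hPd : Differentiable ℝ (unc φ) := hφ.differentiable (by norm_num)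
  have hA1d : Differentiable ℝ (D1 (unc α)) := (contDiff_D1 hα).differentiable (by norm_num)
  have hA2d : Differentiable ℝ (D2 (unc α)) := (contDiff_D2 hα).differentiable (by norm_num)
  have hL1d : Differentiable ℝ (D1 (unc Λ)) := (contDiff_D1 hΛ).differentiable (by norm_num)
  have hL2d : Differentiable ℝ (D2 (unc Λ)) := (contDiff_D2 hΛ).differentiable (by norm_num)
  have hP1d : Differentiable ℝ (D1 (unc φ)) := (contDiff_D1 hφ).differentiable (by norm_num)
  have hP2d : Differentiable ℝ (D2 (unc φ)) := (contDiff_D2 hφ).differentiable (by norm_num)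
  -- atomic derivatives, t-direction
  have HA : HasDerivAt (fun s => α s x) (D1 (unc α) (t, x)) t := hasDerivAt_D1 _ t x (hAd _)
  have HA1 : HasDerivAt (fun s => D1 (unc α) (s, x)) (D1 (D1 (unc α)) (t, x)) t :=
    hasDerivAt_D1 _ t x (hA1d _)
  have HA2 : HasDerivAt (fun s => D2 (unc α) (s, x)) (D1 (D2 (unc α)) (t, x)) t :=
    hasDerivAt_D1 _ t x (hA2d _)
  have HL : HasDerivAt (fun s => Λ s x) (D1 (unc Λ) (t, x)) t := hasDerivAt_D1 _ t x (hLd _)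
  have HL1 : HasDerivAt (fun s => D1 (unc Λ) (s, x)) (D1 (D1 (unc Λ)) (t, x)) t :=
    hasDerivAt_D1 _ t x (hL1d _)
  have HL2 : HasDerivAt (fun s => D2 (unc Λ) (s, x)) (D1 (D2 (unc Λ)) (t, x)) t :=
    hasDerivAt_D1 _ t x (hL2d _)
  have HP1 : HasDerivAt (fun s => D1 (unc φ) (s, x)) (D1 (D1 (unc φ)) (t, x)) t :=
    hasDerivAt_D1 _ t x (hP1d _)
  have HP2 : HasDerivAt (fun s => D2 (unc φ) (s, x)) (D1 (D2 (unc φ)) (t, x)) t :=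
    hasDerivAt_D1 _ t x (hP2d _)
  -- atomic derivatives, x-direction
  have KA : HasDerivAt (fun y => α t y) (D2 (unc α) (t, x)) x := hasDerivAt_D2 _ t x (hAd _)
  have KA1 : HasDerivAt (fun y => D1 (unc α) (t, y)) (D2 (D1 (unc α)) (t, x)) x :=
    hasDerivAt_D2 _ t x (hA1d _)
  have KA2 : HasDerivAt (fun y => D2 (unc α) (t, y)) (D2 (D2 (unc α)) (t, x)) x :=
    hasDerivAt_D2 _ t x (hA2d _)
  have KL : HasDerivAt (fun y => Λ t y) (D2 (unc Λ) (t, x)) x := hasDerivAt_D2 _ t x (hLd _)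
  have KL1 : HasDerivAt (fun y => D1 (unc Λ) (t, y)) (D2 (D1 (unc Λ)) (t, x)) x :=
    hasDerivAt_D2 _ t x (hL1d _)
  have KL2 : HasDerivAt (fun y => D2 (unc Λ) (t, y)) (D2 (D2 (unc Λ)) (t, x)) x :=
    hasDerivAt_D2 _ t x (hL2d _)
  have KP1 : HasDerivAt (fun y => D1 (unc φ) (t, y)) (D2 (D1 (unc φ)) (t, x)) x :=
    hasDerivAt_D2 _ t x (hP1d _)
  have KP2 : HasDerivAt (fun y => D2 (unc φ) (t, y)) (D2 (D2 (unc φ)) (t, x)) x :=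
    hasDerivAt_D2 _ t x (hP2d _)
  have ha0 : α t x ≠ 0 := (hpos t x).ne'
  have hA2ne : α t x ^ 2 ≠ 0 := pow_ne_zero _ ha0
  have hden' : D2 (unc α) (t, x) ^ 2 - D1 (unc α) (t, x) ^ 2 ≠ 0 := by
    rw [← px_eq hAd, ← pt_eq hAd]
    exact sub_ne_zero.mpr (hne t x)
  -- convert the field equations
  have e1 := heqΛ t x
  simp only [pt_eq hLd, px_eq hLd, pt_eq hPd, px_eq hPd] at e1
  simp only [pt, px] at e1
  rw [(HA.fun_mul HL1).deriv, (KA.fun_mul KL2).deriv, Real.sinh_two_mul] at e1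
  have e2 := heqφ t x
  simp only [pt_eq hPd, px_eq hPd] at e2
  simp only [pt, px] at e2
  rw [((HA.fun_mul ((HL.sinh).fun_pow 2)).fun_mul HP1).deriv,
      ((KA.fun_mul ((KL.sinh).fun_pow 2)).fun_mul KP2).deriv] at e2
  have e3 := heqα t x
  simp only [pt, px] at e3
  have r1 : (deriv fun u => α u x) = fun s => D1 (unc α) (s, x) := funext fun s => pt_eq hAd s x
  have r2 : (deriv fun v => α t v) = fun y => D2 (unc α) (t, y) := funext fun y => px_eq hAd t y
  rw [r1, r2, HA1.deriv, KA2.deriv] at e3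
  -- rewrite the goal
  show pt (pDen Λ φ α) t x + px (eDen Λ φ α) t x = 0
  have hq : (fun s => pDen Λ φ α s x) = fun s =>
      α s x / (D2 (unc α) (s, x) ^ 2 - D1 (unc α) (s, x) ^ 2) *
        (D2 (unc α) (s, x) *
            (D2 (unc α) (s, x) ^ 2 / α s x ^ 2 + D1 (unc α) (s, x) ^ 2 / α s x ^ 2
              + D1 (unc Λ) (s, x) ^ 2 + D2 (unc Λ) (s, x) ^ 2
              + 4 * Real.sinh (Λ s x) ^ 2 * (D1 (unc φ) (s, x) ^ 2 + D2 (unc φ) (s, x) ^ 2)) -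
          2 * D1 (unc α) (s, x) *
            (D2 (unc α) (s, x) * D1 (unc α) (s, x) / α s x ^ 2
              + D1 (unc Λ) (s, x) * D2 (unc Λ) (s, x)
              + 4 * Real.sinh (Λ s x) ^ 2 * (D1 (unc φ) (s, x) * D2 (unc φ) (s, x)))) := by
    funext s
    simp only [pDen, kap, h1, h2, pt_eq hAd, px_eq hAd, pt_eq hLd, px_eq hLd,
      pt_eq hPd, px_eq hPd]
  have he : (fun y => eDen Λ φ α t y) = fun y =>
      α t y / (D2 (unc α) (t, y) ^ 2 - D1 (unc α) (t, y) ^ 2) *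
        (D1 (unc α) (t, y) *
            (D2 (unc α) (t, y) ^ 2 / α t y ^ 2 + D1 (unc α) (t, y) ^ 2 / α t y ^ 2
              + D1 (unc Λ) (t, y) ^ 2 + D2 (unc Λ) (t, y) ^ 2
              + 4 * Real.sinh (Λ t y) ^ 2 * (D1 (unc φ) (t, y) ^ 2 + D2 (unc φ) (t, y) ^ 2)) -
          2 * D2 (unc α) (t, y) *
            (D2 (unc α) (t, y) * D1 (unc α) (t, y) / α t y ^ 2
              + D1 (unc Λ) (t, y) * D2 (unc Λ) (t, y)
              + 4 * Real.sinh (Λ t y) ^ 2 * (D1 (unc φ) (t, y) * D2 (unc φ) (t, y)))) := by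
    funext y
    simp only [eDen, kap, h1, h2, pt_eq hAd, px_eq hAd, pt_eq hLd, px_eq hLd,
      pt_eq hPd, px_eq hPd]
  have HDP := (HA.fun_div ((HA2.fun_pow 2).fun_sub (HA1.fun_pow 2)) hden').fun_mul
      ((HA2.fun_mul ((((((HA2.fun_pow 2).fun_div (HA.fun_pow 2) hA2ne).fun_add
            ((HA1.fun_pow 2).fun_div (HA.fun_pow 2) hA2ne)).fun_add (HL1.fun_pow 2)).fun_add (HL2.fun_pow 2)).fun_add
          ((((HL.sinh).fun_pow 2).const_mul (4:ℝ)).fun_mul ((HP1.fun_pow 2).fun_add (HP2.fun_pow 2))))).fun_sub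
        ((HA1.const_mul (2:ℝ)).fun_mul
          ((((HA2.fun_mul HA1).fun_div (HA.fun_pow 2) hA2ne).fun_add (HL1.fun_mul HL2)).fun_add
            ((((HL.sinh).fun_pow 2).const_mul (4:ℝ)).fun_mul (HP1.fun_mul HP2)))))
  have HDE := (KA.fun_div ((KA2.fun_pow 2).fun_sub (KA1.fun_pow 2)) hden').fun_mul
      ((KA1.fun_mul ((((((KA2.fun_pow 2).fun_div (KA.fun_pow 2) hA2ne).fun_add
            ((KA1.fun_pow 2).fun_div (KA.fun_pow 2) hA2ne)).fun_add (KL1.fun_pow 2)).fun_add (KL2.fun_pow 2)).fun_add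
          ((((KL.sinh).fun_pow 2).const_mul (4:ℝ)).fun_mul ((KP1.fun_pow 2).fun_add (KP2.fun_pow 2))))).fun_sub
        ((KA2.const_mul (2:ℝ)).fun_mul
          ((((KA2.fun_mul KA1).fun_div (KA.fun_pow 2) hA2ne).fun_add (KL1.fun_mul KL2)).fun_add
            ((((KL.sinh).fun_pow 2).const_mul (4:ℝ)).fun_mul (KP1.fun_mul KP2)))))
  simp only [pt, px]
  rw [hq, he, HDP.deriv, HDE.deriv]
  simp only [D1D2_symm hα', D1D2_symm hΛ', D1D2_symm hφ']
  set a := α t x with hsa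
  set a1 := D1 (unc α) (t, x) with hsa1
  set a2 := D2 (unc α) (t, x) with hsa2
  set b11 := D1 (D1 (unc α)) (t, x) with hsb11
  set b12 := D2 (D1 (unc α)) (t, x) with hsb12
  set b22 := D2 (D2 (unc α)) (t, x) with hsb22
  set l1 := D1 (unc Λ) (t, x) with hsl1
  set l2 := D2 (unc Λ) (t, x) with hsl2
  set m11 := D1 (D1 (unc Λ)) (t, x) with hsm11
  set m12 := D2 (D1 (unc Λ)) (t, x) with hsm12
  set m22 := D2 (D2 (unc Λ)) (t, x) with hsm22
  set f1 := D1 (unc φ) (t, x) with hsf1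
  set f2 := D2 (unc φ) (t, x) with hsf2
  set g11 := D1 (D1 (unc φ)) (t, x) with hsg11
  set g12 := D2 (D1 (unc φ)) (t, x) with hsg12
  set g22 := D2 (D2 (unc φ)) (t, x) with hsg22
  set sh := Real.sinh (Λ t x) with hssh
  set ch := Real.cosh (Λ t x) with hsch
  norm_num at e2
  field_simp
  norm_num only
  apply mul_left_cancel₀ (mul_ne_zero (pow_ne_zero 5 ha0) hden')
  linear_combination
      (2*a^8*a2^5*l1 - 2*a^8*a1*a2^4*l2 - 4*a^8*a1^2*a2^3*l1 + 4*a^8*a1^3*a2^2*l2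
        + 2*a^8*a1^4*a2*l1 - 2*a^8*a1^5*l2) * e1
    + (8*a^8*a2^5*f1 - 8*a^8*a1*a2^4*f2 - 16*a^8*a1^2*a2^3*f1 + 16*a^8*a1^3*a2^2*f2
        + 8*a^8*a1^4*a2*f1 - 8*a^8*a1^5*f2) * e2
    + (-8*a^9*a2^4*f1*f2*sh^2 - 2*a^9*a2^4*l1*l2 + 8*a^9*a1*a2^3*f2^2*sh^2
        + 8*a^9*a1*a2^3*f1^2*sh^2 + 2*a^9*a1*a2^3*l2^2 + 2*a^9*a1*a2^3*l1^2
        - 8*a^9*a1^3*a2*f2^2*sh^2 - 8*a^9*a1^3*a2*f1^2*sh^2 - 2*a^9*a1^3*a2*l2^2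
        - 2*a^9*a1^3*a2*l1^2 + 8*a^9*a1^4*f1*f2*sh^2 + 2*a^9*a1^4*l1*l2) * e3
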